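/- arXiv:1203.1854 — 4 statements merged into one kernel-verified Lean document; each statement's English description precedes it below -/
import Mathlib

section
/- Let γ = (v_0, v_1, …, v_{ℓ−1}, v_ℓ = v_0) be a simple cycle of length ℓ in a Tanner graph G, and let h ∈ ℕ₊ be such that ℓ does not divide h. For 0 ≤ i ≤ ℓ−1 let ψ_i = (v_i, v_{(i+1) mod ℓ}, …, v_{(i+h) mod ℓ}) be the length-h segment of γ starting at v_i. Then every vertex of γ has total multiplicity exactly h+1 over the paths ψ_0, …, ψ_{ℓ−1}, and consequently χ_G(γ) = Σ_{i=0}^{ℓ−1} (1/(h+1)) χ_G(ψ_i). -/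
open Finset

/-- A Tanner graph: a bipartite graph between a finite set `V` of variable nodes and a
finite set `J` of local-code nodes, given by its bipartite adjacency relation. -/
structure Tanner (V J : Type) where
  adj : V → J → Bool

namespace Tanner

variable {V J : Type} [Fintype V] [Fintype J] [DecidableEq V] [DecidableEq J]

/-- The vertex set of a Tanner graph. -/
abbrev Vert (V J : Type) := V ⊕ J

/-- Adjacency (as a `Bool`) between vertices of a Tanner graph. -/
def adjB (G : Tanner V J) : Vert V J → Vert V J → Bool
  | Sum.inl v, Sum.inr c => G.adj v c
  | Sum.inr c, Sum.inl v => G.adj v c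
  | _, _ => false

/-- Adjacency between vertices of a Tanner graph. -/
def Adj (G : Tanner V J) (w u : Vert V J) : Prop := G.adjB w u = true

/-- Degree of a variable node. -/
def degV (G : Tanner V J) (v : V) : ℕ := (univ.filter fun c => G.adj v c).card

/-- Degree of a local-code node. -/
def degC (G : Tanner V J) (c : J) : ℕ := (univ.filter fun v => G.adj v c).card

/-- A path of length `h`: a sequence of `h + 1` vertices in which every two consecutive
vertices are adjacent. -/
def IsPath (G : Tanner V J) (h : ℕ) (p : List (Vert V J)) : Prop :=
  p.length = h + 1 ∧ p.Chain' G.Adj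

/-- A path is backtrackless if it has no three consecutive vertices of the form
`(u, v, u)`. -/
def Backtrackless (p : List (Vert V J)) : Prop :=
  ∀ i, ∀ hi : i + 2 < p.length, p.get ⟨i, by omega⟩ ≠ p.get ⟨i + 2, hi⟩

/-- A simple cycle: a closed path whose only repeated vertex is the first vertex,
which equals the last vertex. -/
def IsSimpleCycle (G : Tanner V J) (p : List (Vert V J)) : Prop :=
  4 ≤ p.length ∧ p.Chain' G.Adj ∧ p.head? = p.getLast? ∧ p.dropLast.Nodup

/-- The multiplicity of a vertex in a path; for a closed path, the common first/last
vertex is counted once. -/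
def mult (p : List (Vert V J)) (w : Vert V J) : ℕ :=
  if 2 ≤ p.length ∧ p.head? = p.getLast? then p.dropLast.count w else p.count w

/-- The normalized characteristic vector of a path: the multiplicity of each variable
node in the path divided by its degree. -/
noncomputable def chi (G : Tanner V J) (p : List (Vert V J)) : V → ℝ :=
  fun v => (mult p (Sum.inl v) : ℝ) / (G.degV v : ℝ)

/-- The deviation set `B^{(h)}`: normalized characteristic vectors of backtrackless
paths of length `h`, scaled by `1 / (h + 1)`. -/
def Bset (G : Tanner V J) (h : ℕ) : Set (V → ℝ) :=
  { β | ∃ p : List (Vert V J), G.IsPath h p ∧ Backtrackless p ∧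
      β = fun v => G.chi p v / (h + 1) }

end Tanner

section Words

variable {V : Type} [Fintype V]

/-- The standard inner product on `ℝ^V`. -/
noncomputable def inner' (x y : V → ℝ) : ℝ := ∑ v, x v * y v

/-- A 0-1 word viewed as a real vector. -/
noncomputable def toR (x : V → Bool) : V → ℝ := fun v => if x v then 1 else 0

/-- The relative point `x ⊕ f`, defined coordinatewise by `|x_i - f_i|`. -/
noncomputable def relPt (x : V → Bool) (f : V → ℝ) : V → ℝ := fun v => |toR x v - f v|

/-- The coordinatewise product `(-1)^x ⋆ λ`. -/
noncomputable def flip' (x : V → Bool) (lam : V → ℝ) : V → ℝ :=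
  fun v => (if x v then -1 else 1) * lam v

end Words

/-- Local optimality: a codeword `x` is `h`-locally optimal with respect to `λ` if
`⟨λ, x ⊕ β⟩ > ⟨λ, x⟩` for every deviation `β ∈ B^{(h)}`. -/
def IsLocOpt {V J : Type} [Fintype V] [Fintype J] [DecidableEq V] [DecidableEq J]
    (G : Tanner V J) (h : ℕ) (x : V → Bool) (lam : V → ℝ) : Prop :=
  ∀ β ∈ G.Bset h, inner' lam (relPt x β) > inner' lam (toR x)

/-- A Tanner code: a Tanner graph together with a local code at every local-code node.
A local code is represented as the set of all assignments to the variable nodes whose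
restriction to the neighborhood of the local-code node is a local codeword; accordingly,
its membership predicate depends only on the values at the neighbors. -/
structure TannerCode (V J : Type) extends Tanner V J where
  localCode : J → Set (V → Bool)
  localCode_local : ∀ (j : J) (x y : V → Bool),
    (∀ v, adj v j = true → x v = y v) → x ∈ localCode j → y ∈ localCode j

namespace TannerCode

variable {V J : Type} [Fintype V] [Fintype J] [DecidableEq V] [DecidableEq J]

/-- The Tanner code: all words whose restriction to the neighborhood of every
local-code node is a local codeword. -/
def code (T : TannerCode V J) : Set (V → Bool) := { x | ∀ j, x ∈ T.localCode j }

/-- An even Tanner code: every variable node has even degree and every local codeword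
has even Hamming weight (on the neighborhood of its local-code node). -/
def IsEven (T : TannerCode V J) : Prop :=
  (∀ v, Even (T.toTanner.degV v)) ∧
  ∀ j, ∀ x ∈ T.localCode j,
    Even ((univ.filter fun v => T.adj v j = true ∧ x v = true).card)

/-- Linearity of the local codes: each local code contains the all-zero word and is
closed under mod-2 sums. -/
def IsLinear (T : TannerCode V J) : Prop :=
  (∀ j, (fun _ => false) ∈ T.localCode j) ∧
  ∀ j, ∀ x ∈ T.localCode j, ∀ y ∈ T.localCode j, (fun v => xor (x v) (y v)) ∈ T.localCode j

/-- The generalized fundamental polytope: the intersection of the convex hulls of the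
extended local codes. -/
noncomputable def polytope (T : TannerCode V J) : Set (V → ℝ) :=
  ⋂ j, convexHull ℝ (toR '' T.localCode j)

end TannerCode

lemma count_map_range' {α : Type*} [BEq α] [LawfulBEq α] [DecidableEq α]
    (f : ℕ → α) (n : ℕ) (a : α) :
    ((List.range n).map f).count a = ((Finset.range n).filter fun j => f j = a).card := by
  induction n with
  | zero => simp
  | succ n ih =>
    rw [List.range_succ, List.map_append, List.count_append, Finset.range_add_one,
      Finset.filter_insert]
    by_cases hfa : f n = a
    · rw [if_pos hfa, Finset.card_insert_of_notMem (by simp), ih]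
      simp [hfa]
    · rw [if_neg hfa, ih]
      have h0 : List.count a (List.map f [n]) = 0 := by
        rw [List.map_singleton, List.count_eq_zero]
        simp only [List.mem_singleton]
        exact fun hc => hfa hc.symm
      rw [h0, Nat.add_zero]

lemma head?_map_range' {α : Type*} (f : ℕ → α) (n : ℕ) :
    ((List.range (n + 1)).map f).head? = some (f 0) := by
  rw [List.range_succ_eq_map]
  simp

lemma getLast?_map_range' {α : Type*} (f : ℕ → α) (n : ℕ) :
    ((List.range (n + 1)).map f).getLast? = some (f n) := by
  rw [List.range_succ, List.map_append]
  simp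

/-- Let `γ = (v_0, …, v_ℓ = v_0)` be a simple cycle of length `ℓ` in a
Tanner graph `G` (encoded by an `ℓ`-periodic vertex sequence `v` that is injective on
`[0, ℓ)` with consecutive vertices adjacent), and let `h ∈ ℕ₊` be such that `ℓ ∤ h`.
For `0 ≤ i ≤ ℓ−1` let `ψ_i = (v_i, …, v_{i+h})` be the length-`h` segment of `γ`
starting at `v_i`. Then every vertex of `γ` has total multiplicity exactly `h+1` over
`ψ_0, …, ψ_{ℓ−1}`, and `χ_G(γ) = Σ_{i<ℓ} (1/(h+1)) χ_G(ψ_i)`. -/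
theorem stmt6 {V J : Type} [Fintype V] [Fintype J] [DecidableEq V] [DecidableEq J]
    (G : Tanner V J) (ℓ : ℕ) (hℓ : 0 < ℓ) (v : ℕ → Tanner.Vert V J)
    (hper : ∀ i, v (i + ℓ) = v i)
    (hinj : ∀ i < ℓ, ∀ j < ℓ, v i = v j → i = j)
    (hadj : ∀ i, G.Adj (v i) (v (i + 1)))
    (h : ℕ) (hh : 0 < h) (hnd : ¬ ℓ ∣ h) :
    (∀ k < ℓ, ∑ i ∈ Finset.range ℓ,
        Tanner.mult ((List.range (h + 1)).map fun j => v (i + j)) (v k) = h + 1) ∧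
    ∀ u : V, G.chi ((List.range (ℓ + 1)).map v) u =
      ∑ i ∈ Finset.range ℓ,
        (1 / (h + 1 : ℝ)) * G.chi ((List.range (h + 1)).map fun j => v (i + j)) u := by
  have vmod : ∀ n, v n = v (n % ℓ) := by
    intro n
    induction n using Nat.strong_induction_on with
    | _ n ih =>
      rcases lt_or_ge n ℓ with hlt | hge
      · rw [Nat.mod_eq_of_lt hlt]
      · have hn : n - ℓ + ℓ = n := Nat.sub_add_cancel hge
        calc v n = v (n - ℓ + ℓ) := by rw [hn]
          _ = v (n - ℓ) := hper _
          _ = v ((n - ℓ) % ℓ) := ih _ (by omega)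
          _ = v (n % ℓ) := by rw [← Nat.add_mod_right (n - ℓ) ℓ, hn]
  have veq : ∀ a b : ℕ, v a = v b ↔ a % ℓ = b % ℓ := by
    intro a b
    constructor
    · intro hab
      exact hinj _ (Nat.mod_lt _ hℓ) _ (Nat.mod_lt _ hℓ) (by rw [← vmod, ← vmod]; exact hab)
    · intro hab; rw [vmod a, vmod b, hab]
  have hne : ∀ i : ℕ, v i ≠ v (i + h) := by
    intro i he
    rw [veq] at he
    have hd := (Nat.modEq_iff_dvd' (Nat.le_add_right i h)).mp he
    rw [Nat.add_sub_cancel_left] at hd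
    exact hnd hd
  have hbeq : ∀ x y : Tanner.Vert V J, (x == y) = true ↔ x = y := by
    intro x y
    cases x <;> cases y
    case inl.inl a b =>
      rw [show ((Sum.inl a : Tanner.Vert V J) == Sum.inl b) = (a == b) from rfl]; simp
    case inl.inr a b =>
      rw [show ((Sum.inl a : Tanner.Vert V J) == Sum.inr b) = false from rfl]; simp
    case inr.inl a b =>
      rw [show ((Sum.inr a : Tanner.Vert V J) == Sum.inl b) = false from rfl]; simp
    case inr.inr a b =>
      rw [show ((Sum.inr a : Tanner.Vert V J) == Sum.inr b) = (a == b) from rfl]; simp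
  haveI : LawfulBEq (Tanner.Vert V J) :=
    { eq_of_beq := fun {a b} hab => (hbeq a b).1 hab
      rfl := fun {a} => (hbeq a a).2 rfl }
  have hmultψ : ∀ (i : ℕ) (w : Tanner.Vert V J),
      Tanner.mult ((List.range (h + 1)).map fun j => v (i + j)) w
        = ((Finset.range (h + 1)).filter fun j => v (i + j) = w).card := by
    intro i w
    rw [Tanner.mult, if_neg]
    · exact count_map_range' _ _ _
    rintro ⟨-, hhead⟩
    rw [head?_map_range', getLast?_map_range'] at hhead
    exact hne i (by simpa using hhead)
  have part1 : ∀ k < ℓ, ∑ i ∈ Finset.range ℓ,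
      Tanner.mult ((List.range (h + 1)).map fun j => v (i + j)) (v k) = h + 1 := by
    intro k hk
    have hkm : k % ℓ = k := Nat.mod_eq_of_lt hk
    have key : ∀ j : ℕ, (∑ i ∈ Finset.range ℓ, if (i + j) % ℓ = k then 1 else 0) = 1 := by
      intro j
      set i0 := (k + (ℓ - j % ℓ)) % ℓ with hi0def
      have hi0 : i0 < ℓ := Nat.mod_lt _ hℓ
      have hdm := Nat.div_add_mod j ℓ
      have heq : k + (ℓ - j % ℓ) + j = k + ℓ * (j / ℓ + 1) := by
        have hr : j % ℓ < ℓ := Nat.mod_lt _ hℓ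
        rw [Nat.mul_add, Nat.mul_one]
        generalize ℓ * (j / ℓ) = m at hdm ⊢
        generalize j % ℓ = r at hdm hr ⊢
        omega
      have h1 : (i0 + j) % ℓ = k := by
        rw [hi0def, Nat.mod_add_mod, heq, Nat.add_mul_mod_self_left, hkm]
      have huniq : ∀ i < ℓ, (i + j) % ℓ = k → i = i0 := by
        intro i hi hik
        have h2 : (i + j) % ℓ = (i0 + j) % ℓ := by rw [hik, h1]
        have h3 : i % ℓ = i0 % ℓ := Nat.ModEq.add_right_cancel' j h2
        rwa [Nat.mod_eq_of_lt hi, Nat.mod_eq_of_lt hi0] at h3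
      calc (∑ i ∈ Finset.range ℓ, if (i + j) % ℓ = k then 1 else 0)
          = ∑ i ∈ Finset.range ℓ, if i = i0 then 1 else 0 := by
            refine Finset.sum_congr rfl fun i hi => ?_
            simp only [Finset.mem_range] at hi
            congr 1
            exact propext ⟨huniq i hi, fun hii => hii ▸ h1⟩
        _ = 1 := by rw [Finset.sum_ite_eq' (Finset.range ℓ)]; simp [hi0]
    calc ∑ i ∈ Finset.range ℓ,
          Tanner.mult ((List.range (h + 1)).map fun j => v (i + j)) (v k)
        = ∑ i ∈ Finset.range ℓ, ((Finset.range (h + 1)).filter fun j => (i + j) % ℓ = k).card := by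
          refine Finset.sum_congr rfl fun i _ => ?_
          rw [hmultψ]
          congr 1
          apply Finset.filter_congr
          intro j _
          rw [veq, hkm]
      _ = ∑ i ∈ Finset.range ℓ, ∑ j ∈ Finset.range (h + 1), if (i + j) % ℓ = k then 1 else 0 := by
          refine Finset.sum_congr rfl fun i _ => ?_
          rw [Finset.card_filter]
      _ = ∑ j ∈ Finset.range (h + 1), ∑ i ∈ Finset.range ℓ, if (i + j) % ℓ = k then 1 else 0 :=
          Finset.sum_comm
      _ = ∑ _j ∈ Finset.range (h + 1), 1 := Finset.sum_congr rfl fun j _ => key j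
      _ = h + 1 := by simp
  refine ⟨part1, ?_⟩
  intro u
  have hγ : Tanner.mult ((List.range (ℓ + 1)).map v) (Sum.inl u : Tanner.Vert V J)
      = ((Finset.range ℓ).filter fun i => v i = Sum.inl u).card := by
    rw [Tanner.mult, if_pos]
    · rw [show ((List.range (ℓ + 1)).map v).dropLast = (List.range ℓ).map v by
        rw [List.range_succ, List.map_append]; simp]
      exact count_map_range' v ℓ _
    · constructor
      · simp; omega
      · rw [head?_map_range', getLast?_map_range']
        have := hper 0
        rw [Nat.zero_add] at this
        rw [this]
  simp only [Tanner.chi]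
  by_cases hcase : ∃ k < ℓ, v k = Sum.inl u
  · obtain ⟨k, hk, hvk⟩ := hcase
    have hfil : ((Finset.range ℓ).filter fun i => v i = Sum.inl u) = {k} := by
      ext i
      simp only [Finset.mem_filter, Finset.mem_range, Finset.mem_singleton]
      constructor
      · rintro ⟨hi, hvi⟩; exact hinj i hi k hk (hvi.trans hvk.symm)
      · rintro rfl; exact ⟨hk, hvk⟩
    rw [hγ, hfil, Finset.card_singleton, ← hvk]
    have hs : ∑ i ∈ Finset.range ℓ,
        (Tanner.mult ((List.range (h + 1)).map fun j => v (i + j)) (v k) : ℝ)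
        = ((h : ℝ) + 1) := by
      rw [← Nat.cast_sum, part1 k hk]
      push_cast
      ring
    rw [← Finset.mul_sum, ← Finset.sum_div, hs]
    by_cases hd : (G.degV u : ℝ) = 0
    · simp [hd]
    · have hh1 : ((h : ℝ) + 1) ≠ 0 := by positivity
      field_simp
      norm_num
  · push_neg at hcase
    have hγ0 : ((Finset.range ℓ).filter fun i => v i = Sum.inl u) = ∅ := by
      rw [Finset.filter_eq_empty_iff]
      intro i hi
      exact hcase i (Finset.mem_range.mp hi)
    have hψ0 : ∀ i : ℕ,
        Tanner.mult ((List.range (h + 1)).map fun j => v (i + j)) (Sum.inl u : Tanner.Vert V J)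
          = 0 := by
      intro i
      rw [hmultψ, Finset.card_eq_zero, Finset.filter_eq_empty_iff]
      intro j _
      rw [vmod (i + j)]
      exact hcase _ (Nat.mod_lt _ hℓ)
    simp [hγ, hγ0, hψ0]
end

section
/- Let γ = (v_0, v_1, …, v_{ℓ−1}, v_ℓ = v_0) be a simple cycle of length ℓ in a Tanner graph G, and let h ∈ ℕ₊ be a multiple of ℓ. For 0 ≤ i ≤ ℓ−1 let ψ_i = (v_i, v_{(i+1) mod ℓ}, …, v_{(i+h) mod ℓ}) be the length-h segment of γ starting at v_i; each ψ_i is then a closed path. Then every vertex of γ has total multiplicity exactly h over the paths ψ_0, …, ψ_{ℓ−1} (counting the common first/last vertex of each ψ_i once), and consequently χ_G(γ) = ((h+1)/h) · Σ_{i=0}^{ℓ−1} (1/(h+1)) χ_G(ψ_i). -/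
open Finset

section Aux

variable {V J : Type} [DecidableEq V] [DecidableEq J]

private lemma vert_beq_true (w : V ⊕ J) : (w == w) = true := by
  cases w with
  | inl a => show decide (a = a) = true; simp
  | inr a => show decide (a = a) = true; simp

private lemma vert_beq_false (a w : V ⊕ J) (h : ¬ a = w) : (a == w) = false := by
  cases a <;> cases w <;> first
    | rfl
    | (rename_i x y; show decide (x = y) = false; simp_all)

private lemma count_map_range (f : ℕ → V ⊕ J) (w : V ⊕ J) (n : ℕ) :
    ((List.range n).map f).count w = ∑ j ∈ Finset.range n, (if f j = w then 1 else 0) := by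
  induction n with
  | zero => simp
  | succ n ih =>
      rw [List.range_succ, List.map_append, List.count_append, Finset.sum_range_succ, ih]
      by_cases hfw : f n = w
      · simp [hfw, List.count_singleton, vert_beq_true]
      · have : List.count w [f n] = 0 := by
          simp [List.count_singleton, vert_beq_false (f n) w hfw]
        simp [hfw, this]

private lemma mult_map_range (f : ℕ → V ⊕ J) (n : ℕ) (hn : 0 < n) (hf : f n = f 0)
    (w : V ⊕ J) :
    Tanner.mult ((List.range (n + 1)).map f) w
      = ∑ j ∈ Finset.range n, (if f j = w then 1 else 0) := by
  rw [Tanner.mult, if_pos, List.range_succ, List.map_append, List.map_singleton,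
    List.dropLast_concat, count_map_range]
  constructor
  · simp; omega
  · rw [List.range_succ, List.map_append, List.map_singleton]
    have h1 : ((List.range n).map f ++ [f n]).head? = some (f 0) := by
      obtain ⟨m, rfl⟩ := Nat.exists_eq_succ_of_ne_zero hn.ne'
      rw [List.head?_append_of_ne_nil]
      · rw [List.head?_map, List.range_succ_eq_map]
        simp
      · simp
    have h2 : ((List.range n).map f ++ [f n]).getLast? = some (f n) := by
      simp
    rw [h1, h2, hf]

end Aux

/-- Let `γ = (v_0, …, v_ℓ = v_0)` be a simple cycle of length `ℓ` in a
Tanner graph `G` (encoded by an `ℓ`-periodic vertex sequence `v` that is injective on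
`[0, ℓ)` with consecutive vertices adjacent), and let `h ∈ ℕ₊` be a multiple of `ℓ`.
For `0 ≤ i ≤ ℓ−1` let `ψ_i = (v_i, …, v_{i+h})` be the length-`h` segment of `γ`
starting at `v_i`; each `ψ_i` is then a closed path. Then every vertex of `γ` has
total multiplicity exactly `h` over `ψ_0, …, ψ_{ℓ−1}` (counting the common first/last
vertex of each `ψ_i` once), and `χ_G(γ) = ((h+1)/h) · Σ_{i<ℓ} (1/(h+1)) χ_G(ψ_i)`. -/
theorem stmt7 {V J : Type} [Fintype V] [Fintype J] [DecidableEq V] [DecidableEq J]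
    (G : Tanner V J) (ℓ : ℕ) (hℓ : 0 < ℓ) (v : ℕ → Tanner.Vert V J)
    (hper : ∀ i, v (i + ℓ) = v i)
    (hinj : ∀ i < ℓ, ∀ j < ℓ, v i = v j → i = j)
    (hadj : ∀ i, G.Adj (v i) (v (i + 1)))
    (h : ℕ) (hh : 0 < h) (hdvd : ℓ ∣ h) :
    (∀ k < ℓ, ∑ i ∈ Finset.range ℓ,
        Tanner.mult ((List.range (h + 1)).map fun j => v (i + j)) (v k) = h) ∧
    ∀ u : V, G.chi ((List.range (ℓ + 1)).map v) u =
      ((h + 1 : ℝ) / h) * ∑ i ∈ Finset.range ℓ,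
        (1 / (h + 1 : ℝ)) * G.chi ((List.range (h + 1)).map fun j => v (i + j)) u := by
  -- indicator sums
  have hvmod : ∀ n a, v (a + n * ℓ) = v a := by
    intro n
    induction n with
    | zero => simp
    | succ n ih =>
        intro a
        have : a + (n + 1) * ℓ = (a + n * ℓ) + ℓ := by ring
        rw [this, hper, ih]
  have Sshift : ∀ (w : Tanner.Vert V J) (a : ℕ),
      ∑ j ∈ Finset.range ℓ, (if v (a + 1 + j) = w then 1 else 0)
        = ∑ j ∈ Finset.range ℓ, (if v (a + j) = w then 1 else 0) := by
    intro w a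
    obtain ⟨m, rfl⟩ := Nat.exists_eq_succ_of_ne_zero hℓ.ne'
    rw [Finset.sum_range_succ, Finset.sum_range_succ']
    congr 1
    · apply Finset.sum_congr rfl
      intro j _
      have hj : a + 1 + j = a + (j + 1) := by omega
      rw [hj]
    · have : a + 1 + m = a + (m + 1) := by omega
      rw [this, hper]
      simp
  have Sconst : ∀ (w : Tanner.Vert V J) (a : ℕ),
      ∑ j ∈ Finset.range ℓ, (if v (a + j) = w then 1 else 0)
        = ∑ j ∈ Finset.range ℓ, (if v j = w then 1 else 0) := by
    intro w a
    induction a with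
    | zero => simp
    | succ a ih => rw [← ih, ← Sshift w a]
  have Smul : ∀ (w : Tanner.Vert V J) (n a : ℕ),
      ∑ j ∈ Finset.range (n * ℓ), (if v (a + j) = w then 1 else 0)
        = n * ∑ j ∈ Finset.range ℓ, (if v j = w then 1 else 0) := by
    intro w n
    induction n with
    | zero => simp
    | succ n ih =>
        intro a
        have hsplit : (n + 1) * ℓ = n * ℓ + ℓ := by ring
        rw [hsplit, Finset.sum_range_add, ih]
        have : ∀ j, v (a + (n * ℓ + j)) = v (a + j) := by
          intro j
          have : a + (n * ℓ + j) = (a + j) + n * ℓ := by ring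
          rw [this, hvmod]
        simp only [this]
        rw [Sconst w a, add_mul, one_mul]
  obtain ⟨n, hn⟩ := hdvd
  have hn' : h = n * ℓ := by rw [hn]; ring
  have multψ : ∀ (i : ℕ) (w : Tanner.Vert V J),
      Tanner.mult ((List.range (h + 1)).map fun j => v (i + j)) w
        = ∑ j ∈ Finset.range h, (if v (i + j) = w then 1 else 0) := by
    intro i w
    refine mult_map_range (fun j => v (i + j)) h hh ?_ w
    show v (i + h) = v (i + 0)
    rw [hn', hvmod, Nat.add_zero]
  have keysum : ∀ (w : Tanner.Vert V J),
      ∑ i ∈ Finset.range ℓ,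
          Tanner.mult ((List.range (h + 1)).map fun j => v (i + j)) w
        = h * ∑ j ∈ Finset.range ℓ, (if v j = w then 1 else 0) := by
    intro w
    calc ∑ i ∈ Finset.range ℓ,
            Tanner.mult ((List.range (h + 1)).map fun j => v (i + j)) w
        = ∑ _i ∈ Finset.range ℓ,
            n * ∑ j ∈ Finset.range ℓ, (if v j = w then 1 else 0) := by
          apply Finset.sum_congr rfl
          intro i _
          rw [multψ i w, hn', Smul w n i]
      _ = h * ∑ j ∈ Finset.range ℓ, (if v j = w then 1 else 0) := by
          rw [Finset.sum_const, Finset.card_range, smul_eq_mul, ← mul_assoc,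
            mul_comm ℓ n, ← hn']
  have S0one : ∀ k < ℓ, ∑ j ∈ Finset.range ℓ, (if v j = v k then 1 else 0) = 1 := by
    intro k hk
    rw [Finset.sum_eq_single_of_mem k (Finset.mem_range.2 hk)]
    · simp
    · intro j hj hjk
      exact if_neg fun he => hjk (hinj j (Finset.mem_range.1 hj) k hk he)
  refine ⟨fun k hk => by rw [keysum (v k), S0one k hk, mul_one], ?_⟩
  intro u
  have multγ : Tanner.mult ((List.range (ℓ + 1)).map v) (Sum.inl u)
      = ∑ j ∈ Finset.range ℓ, (if v j = Sum.inl u then 1 else 0) :=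
    mult_map_range v ℓ hℓ (by have := hper 0; simpa using this) (Sum.inl u)
  simp only [Tanner.chi, multγ, multψ]
  have hkey := keysum (Sum.inl u)
  simp only [multψ] at hkey
  set S : ℕ := ∑ j ∈ Finset.range ℓ, (if v j = Sum.inl u then 1 else 0) with hS
  set d : ℝ := (G.degV u : ℝ) with hd
  have hsum : ∑ i ∈ Finset.range ℓ, (1 / (h + 1 : ℝ)) *
        (((∑ j ∈ Finset.range h, (if v (i + j) = Sum.inl u then 1 else 0) : ℕ) : ℝ) / d)
      = (1 / (h + 1 : ℝ)) * (((h * S : ℕ) : ℝ) / d) := by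
    rw [← Finset.mul_sum, ← Finset.sum_div]
    congr 2
    exact_mod_cast hkey
  have hh0 : (h : ℝ) ≠ 0 := Nat.cast_ne_zero.2 hh.ne'
  have hh1 : (h : ℝ) + 1 ≠ 0 := by positivity
  have final : ((h : ℝ) + 1) / h * ((1 / ((h : ℝ) + 1)) * (((h * S : ℕ) : ℝ) / d))
      = (S : ℝ) / d := by
    push_cast
    rw [show ((h : ℝ) + 1) / ↑h * (1 / ((h : ℝ) + 1) * (↑h * ↑S / d))
        = (((h : ℝ) + 1) / ↑h * (1 / ((h : ℝ) + 1)) * (↑h * ↑S)) / d from by ring]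
    congr 1
    field_simp
  rw [hsum, final]
end

section
/- Let S be a finite nonempty set of variable nodes of a Tanner graph G in which every variable node v satisfies d_L^min ≤ deg_G(v) ≤ d_L^max, and let λ ∈ {−1, +1}^𝒱. If Σ_{v∈S} λ_v / deg_G(v) ≤ 0, then the number of v ∈ S with λ_v = −1 is at least |S| · d_L^min / (d_L^min + d_L^max). In particular, if a simple path ψ in G with variable-node set S has normalized cost ⟨λ, χ_G(ψ)⟩ ≤ 0, then at least a fraction d_L^min / (d_L^min + d_L^max) of the variable nodes on ψ carry the value −1. -/
open Finset

/-- Let `S` be a finite nonempty set of variable nodes of a Tanner graph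
in which every variable node `v` satisfies `d_L^min ≤ deg_G(v) ≤ d_L^max`, and let
`λ ∈ {−1, +1}^𝒱`. If `Σ_{v∈S} λ_v / deg_G(v) ≤ 0`, then the number of `v ∈ S` with
`λ_v = −1` is at least `|S| · d_L^min / (d_L^min + d_L^max)`. -/
theorem stmt14 {V J : Type} [Fintype V] [Fintype J] [DecidableEq V] [DecidableEq J]
    (G : Tanner V J) (dLmin dLmax : ℕ)
    (hdeg : ∀ v : V, dLmin ≤ G.degV v ∧ G.degV v ≤ dLmax)
    (lam : V → ℝ) (hlam : ∀ v, lam v = 1 ∨ lam v = -1)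
    (S : Finset V) (hS : S.Nonempty)
    (hcost : ∑ v ∈ S, lam v / (G.degV v : ℝ) ≤ 0) :
    (S.card : ℝ) * dLmin / (dLmin + dLmax) ≤
      ((S.filter fun v => lam v = -1).card : ℝ) := by
  rcases Nat.eq_zero_or_pos dLmin with h0 | hpos
  · subst h0
    simp only [Nat.cast_zero, mul_zero, zero_div]
    positivity
  · obtain ⟨v0, hv0⟩ := hS
    have hmaxpos : 0 < dLmax := lt_of_lt_of_le hpos ((hdeg v0).1.trans (hdeg v0).2)
    set Sneg := S.filter fun v => lam v = -1 with hSneg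
    set Spos := S.filter fun v => ¬ lam v = -1 with hSpos
    have hdegpos : ∀ v : V, (0 : ℝ) < (G.degV v : ℝ) := fun v => by
      have := (hdeg v).1
      exact_mod_cast lt_of_lt_of_le hpos this
    -- rewrite the cost sum
    have hsplit : ∑ v ∈ S, lam v / (G.degV v : ℝ)
        = ∑ v ∈ Spos, 1 / (G.degV v : ℝ) - ∑ v ∈ Sneg, 1 / (G.degV v : ℝ) := by
      rw [← Finset.sum_filter_add_sum_filter_not S (fun v => lam v = -1)
        (fun v => lam v / (G.degV v : ℝ))]
      rw [show ∑ v ∈ Sneg, lam v / (G.degV v : ℝ) = ∑ v ∈ Sneg, -(1 / (G.degV v : ℝ)) from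
        Finset.sum_congr rfl fun v hv => by
          rw [(Finset.mem_filter.mp hv).2]; ring]
      rw [show ∑ v ∈ Spos, lam v / (G.degV v : ℝ) = ∑ v ∈ Spos, 1 / (G.degV v : ℝ) from
        Finset.sum_congr rfl fun v hv => by
          rcases hlam v with h | h
          · rw [h]
          · exact absurd h (Finset.mem_filter.mp hv).2]
      rw [Finset.sum_neg_distrib]
      ring
    have hc : ∑ v ∈ Spos, 1 / (G.degV v : ℝ) ≤ ∑ v ∈ Sneg, 1 / (G.degV v : ℝ) := by
      rw [hsplit] at hcost; linarith
    have h1 : (Spos.card : ℝ) * (1 / dLmax) ≤ ∑ v ∈ Spos, 1 / (G.degV v : ℝ) := by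
      have := Finset.card_nsmul_le_sum Spos (fun v => 1 / (G.degV v : ℝ)) (1 / dLmax)
        (fun v _ => by
          apply one_div_le_one_div_of_le (hdegpos v)
          exact_mod_cast (hdeg v).2)
      simpa [nsmul_eq_mul] using this
    have h2 : ∑ v ∈ Sneg, 1 / (G.degV v : ℝ) ≤ (Sneg.card : ℝ) * (1 / dLmin) := by
      have := Finset.sum_le_card_nsmul Sneg (fun v => 1 / (G.degV v : ℝ)) (1 / dLmin)
        (fun v _ => by
          show (1:ℝ) / (G.degV v : ℝ) ≤ 1 / dLmin
          apply one_div_le_one_div_of_le (by exact_mod_cast hpos)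
          exact_mod_cast (hdeg v).1)
      simpa [nsmul_eq_mul] using this
    have hcardN : Sneg.card + Spos.card = S.card :=
      Finset.card_filter_add_card_filter_not (s := S) (p := fun v => lam v = -1)
    have hcard : (Sneg.card : ℝ) + (Spos.card : ℝ) = (S.card : ℝ) := by
      exact_mod_cast hcardN
    have hkey : (Spos.card : ℝ) * dLmin ≤ (Sneg.card : ℝ) * dLmax := by
      have h3 : (Spos.card : ℝ) * (1 / dLmax) ≤ (Sneg.card : ℝ) * (1 / dLmin) :=
        le_trans h1 (le_trans hc h2)
      have hminR : (0:ℝ) < dLmin := by exact_mod_cast hpos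
      have hmaxR : (0:ℝ) < dLmax := by exact_mod_cast hmaxpos
      rw [mul_one_div, mul_one_div, div_le_div_iff₀ hmaxR hminR] at h3
      linarith
    rw [div_le_iff₀ (by positivity)]
    have hNneg : (0:ℝ) ≤ (Sneg.card : ℝ) := Nat.cast_nonneg _
    nlinarith [hkey, hcard]
end

section
/- Let G be a Tanner graph in which every variable node v satisfies d_L^min ≤ deg_G(v) ≤ d_L^max, set δ = d_L^min / (d_L^min + d_L^max), and let p ∈ [0,1]. Let (λ_v)_{v∈𝒱} be independent random variables with Pr(λ_v = −1) = p and Pr(λ_v = +1) = 1 − p. Then for every simple path ψ in G containing exactly m distinct variable nodes, Pr{⟨λ, χ_G(ψ)⟩ ≤ 0} ≤ 2^m · p^{δm}. -/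
open Finset

instance instLawfulBEqSumAux {V J : Type} [DecidableEq V] [DecidableEq J] :
    LawfulBEq (V ⊕ J) where
  eq_of_beq {a b} h := by
    cases a <;> cases b
    · exact congrArg Sum.inl (eq_of_beq h)
    · exact Bool.noConfusion h
    · exact Bool.noConfusion h
    · exact congrArg Sum.inr (eq_of_beq h)
  rfl {a} := by
    cases a with
    | inl v => exact beq_self_eq_true v
    | inr j => exact beq_self_eq_true j

lemma auxCountLeOne {α : Type} [BEq α] [LawfulBEq α] {l : List α} (h : l.Nodup) (a : α) :
    l.count a ≤ 1 := by
  induction l with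
  | nil => simp
  | cons b t ih =>
    rw [List.nodup_cons] at h
    rw [List.count_cons]
    by_cases hba : b = a
    · subst hba
      have h0 : t.count b = 0 := List.count_eq_zero.mpr h.1
      simp [h0]
    · have hf : (b == a) = false := beq_eq_false_iff_ne.mpr hba
      simp [hf, ih h.2]

lemma auxCountEqOne {α : Type} [BEq α] [LawfulBEq α] {l : List α} (h : l.Nodup) {a : α}
    (ha : a ∈ l) : l.count a = 1 :=
  le_antisymm (auxCountLeOne h a) (List.one_le_count_iff.mpr ha)

open MeasureTheory ProbabilityTheory in
/-- Let `G` be a Tanner graph with variable-node degrees between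
`d_L^min` and `d_L^max`, set `δ = d_L^min/(d_L^min + d_L^max)`, and let `p ∈ [0,1]`.
Let `(λ_v)` be independent random variables with `Pr(λ_v = −1) = p` and
`Pr(λ_v = +1) = 1 − p`. Then for every simple path `ψ` in `G` containing exactly `m`
distinct variable nodes, `Pr{⟨λ, χ_G(ψ)⟩ ≤ 0} ≤ 2^m · p^{δm}`. -/
theorem stmt15 {V J Ω : Type} [Fintype V] [Fintype J] [DecidableEq V] [DecidableEq J]
    [MeasurableSpace Ω] (μ : Measure Ω) [IsProbabilityMeasure μ]
    (G : Tanner V J) (dLmin dLmax : ℕ)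
    (hdeg : ∀ v : V, dLmin ≤ G.degV v ∧ G.degV v ≤ dLmax)
    (p : ℝ) (hp0 : 0 ≤ p) (hp1 : p ≤ 1)
    (lam : V → Ω → ℝ) (hmeas : ∀ v, Measurable (lam v))
    (hind : iIndepFun lam μ)
    (hdist : ∀ v, μ { ω | lam v ω = -1 } = ENNReal.ofReal p ∧
      μ { ω | lam v ω = 1 } = ENNReal.ofReal (1 - p))
    (g m : ℕ) (ψ : List (Tanner.Vert V J)) (hψ : G.IsPath g ψ) (hsimple : ψ.Nodup)
    (hm : (univ.filter fun v : V => ψ.contains (Sum.inl v)).card = m) :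
    μ { ω | inner' (fun v => lam v ω) (G.chi ψ) ≤ 0 } ≤
      ENNReal.ofReal (2 ^ m *
        p ^ (((dLmin : ℝ) / ((dLmin : ℝ) + (dLmax : ℝ))) * m)) := by
  classical
  set S : Finset V := univ.filter (fun v : V => ψ.contains (Sum.inl v)) with hSdef
  -- trivial case: exponent is zero
  by_cases htriv : dLmin = 0 ∨ m = 0
  · have hexp : ((dLmin : ℝ) / ((dLmin : ℝ) + (dLmax : ℝ))) * (m : ℝ) = 0 := by
      rcases htriv with h | h <;> simp [h]
    rw [hexp, Real.rpow_zero, mul_one]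
    calc μ _ ≤ 1 := prob_le_one
      _ ≤ ENNReal.ofReal (2 ^ m) := by
          rw [show (1 : ENNReal) = ENNReal.ofReal 1 by simp]
          exact ENNReal.ofReal_le_ofReal (one_le_pow₀ (by norm_num))
  push_neg at htriv
  obtain ⟨hdmin0, hm0⟩ := htriv
  have hm0' : 0 < m := Nat.pos_of_ne_zero hm0
  have hSne : S.Nonempty := Finset.card_pos.mp (by rw [hm]; exact hm0')
  obtain ⟨v0, hv0⟩ := hSne
  have hdm : (0:ℝ) < (dLmin : ℝ) := by
    exact_mod_cast Nat.pos_of_ne_zero hdmin0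
  have hdM : (0:ℝ) < (dLmax : ℝ) := by
    have h1 := (hdeg v0).1
    have h2 := (hdeg v0).2
    have : 0 < dLmax := lt_of_lt_of_le (Nat.pos_of_ne_zero hdmin0) (le_trans h1 h2)
    exact_mod_cast this
  have hdegpos : ∀ v : V, 0 < (G.degV v : ℝ) := by
    intro v
    have h1 := (hdeg v).1
    have : 0 < G.degV v := lt_of_lt_of_le (Nat.pos_of_ne_zero hdmin0) h1
    exact_mod_cast this
  -- multiplicity = count for a nodup path
  have hmult : ∀ w, Tanner.mult ψ w = ψ.count w := by
    intro w
    rw [Tanner.mult]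
    split_ifs with h
    · exfalso
      obtain ⟨hlen, hhl⟩ := h
      rw [List.head?_eq_getElem?, List.getLast?_eq_getElem?] at hhl
      have h0 : 0 < ψ.length := by omega
      have h1 : ψ.length - 1 < ψ.length := by omega
      rw [List.getElem?_eq_getElem h0, List.getElem?_eq_getElem h1] at hhl
      have heq : ψ[0] = ψ[ψ.length - 1] := by exact_mod_cast Option.some_injective _ hhl
      have := (hsimple.getElem_inj_iff (hi := h0) (hj := h1)).mp heq
      omega
    · rfl
  have hmemS : ∀ v : V, v ∈ S ↔ Sum.inl v ∈ ψ := by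
    intro v
    constructor
    · intro hv
      exact List.mem_of_elem_eq_true (Finset.mem_filter.mp hv).2
    · intro hv
      exact Finset.mem_filter.mpr ⟨Finset.mem_univ v, List.elem_eq_true_of_mem hv⟩
  have hchi : ∀ v : V, G.chi ψ v = if v ∈ S then 1 / (G.degV v : ℝ) else 0 := by
    intro v
    rw [Tanner.chi, hmult]
    by_cases hv : v ∈ S
    · rw [auxCountEqOne hsimple ((hmemS v).mp hv), if_pos hv]
      norm_num
    · rw [List.count_eq_zero_of_not_mem (fun hmem => hv ((hmemS v).mpr hmem)), if_neg hv]
      norm_num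
  have hinner : ∀ ω : Ω, inner' (fun v => lam v ω) (G.chi ψ)
      = ∑ v ∈ S, lam v ω / (G.degV v : ℝ) := by
    intro ω
    rw [inner']
    rw [← Finset.sum_subset (Finset.subset_univ S) (fun v _ hv => by
      rw [hchi v, if_neg hv, mul_zero])]
    refine Finset.sum_congr rfl (fun v hv => ?_)
    rw [hchi v, if_pos hv]
    ring
  -- the bad set where some lambda is neither -1 nor 1
  set Neg : V → Set Ω := fun v => {ω | lam v ω = -1} with hNegdef
  set Pos : V → Set Ω := fun v => {ω | lam v ω = 1} with hPosdef
  have hNegMeas : ∀ v, MeasurableSet (Neg v) := fun v =>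
    (hmeas v) (measurableSet_singleton (-1))
  have hPosMeas : ∀ v, MeasurableSet (Pos v) := fun v =>
    (hmeas v) (measurableSet_singleton 1)
  set N : Set Ω := ⋃ v ∈ S, (Neg v ∪ Pos v)ᶜ with hNdef
  have hzero : ∀ v ∈ S, μ ((Neg v ∪ Pos v)ᶜ) = 0 := by
    intro v _
    have hdisj : Disjoint (Neg v) (Pos v) := by
      rw [Set.disjoint_left]
      intro ω h1 h2
      simp only [hNegdef, Set.mem_setOf_eq] at h1
      simp only [hPosdef, Set.mem_setOf_eq] at h2
      rw [h1] at h2; norm_num at h2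
    have hun : μ (Neg v ∪ Pos v) = 1 := by
      rw [measure_union hdisj (hPosMeas v), (hdist v).1, (hdist v).2,
        ← ENNReal.ofReal_add hp0 (by linarith)]
      norm_num
    exact (prob_compl_eq_zero_iff ((hNegMeas v).union (hPosMeas v))).mpr hun
  have hN : μ N = 0 := by
    refine le_antisymm (le_trans (measure_biUnion_finset_le S _) ?_) zero_le
    rw [Finset.sum_congr rfl hzero]
    simp
  -- the family of sign patterns
  set F : Finset (Finset V) := S.powerset.filter
    (fun T => (dLmin : ℝ) * (m : ℝ) ≤ ((dLmin : ℝ) + (dLmax : ℝ)) * (T.card : ℝ)) with hFdef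
  set A : Finset V → Set Ω := fun T => ⋂ v ∈ T, Neg v with hAdef
  -- covering
  have hcover : {ω | inner' (fun v => lam v ω) (G.chi ψ) ≤ 0} ⊆ N ∪ ⋃ T ∈ F, A T := by
    intro ω hω
    simp only [Set.mem_setOf_eq] at hω
    by_cases hωN : ω ∈ N
    · exact Or.inl hωN
    right
    have hpm : ∀ v ∈ S, lam v ω = -1 ∨ lam v ω = 1 := by
      intro v hv
      by_contra hcon
      push_neg at hcon
      apply hωN
      refine Set.mem_iUnion.mpr ⟨v, Set.mem_iUnion.mpr ⟨hv, ?_⟩⟩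
      intro hc
      rcases Set.mem_union _ _ _ |>.mp hc with h | h
      · exact hcon.1 h
      · exact hcon.2 h
    set T : Finset V := S.filter (fun v => lam v ω = -1) with hTdef
    have hmemT : ∀ v : V, v ∈ T ↔ v ∈ S ∧ lam v ω = -1 := fun v => Finset.mem_filter
    have hTsub : T ⊆ S := fun v hv => ((hmemT v).mp hv).1
    have hTpos : ∀ v ∈ S \ T, lam v ω = 1 := by
      intro v hv
      have hv' := Finset.mem_sdiff.mp hv
      rcases hpm v hv'.1 with h | h
      · exact absurd ((hmemT v).mpr ⟨hv'.1, h⟩) hv'.2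
      · exact h
    -- lower bound on the inner product
    have hsplit : ∑ v ∈ S, lam v ω / (G.degV v : ℝ)
        = ∑ v ∈ T, (-1) / (G.degV v : ℝ) + ∑ v ∈ S \ T, 1 / (G.degV v : ℝ) := by
      rw [← Finset.sum_sdiff hTsub, add_comm]
      congr 1
      · refine Finset.sum_congr rfl (fun v hv => ?_)
        rw [((hmemT v).mp hv).2]
      · exact Finset.sum_congr rfl (fun v hv => by rw [hTpos v hv])
    have hbound1 : (-(T.card : ℝ)) / (dLmin : ℝ) ≤ ∑ v ∈ T, (-1) / (G.degV v : ℝ) := by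
      have hterm : ∀ v ∈ T, -(1 / (dLmin : ℝ)) ≤ (-1) / (G.degV v : ℝ) := by
        intro v hv
        rw [neg_div, neg_le_neg_iff]
        exact one_div_le_one_div_of_le hdm (by exact_mod_cast (hdeg v).1)
      calc (-(T.card : ℝ)) / (dLmin : ℝ) = T.card • (-(1 / (dLmin : ℝ))) := by
            simp [nsmul_eq_mul]; ring
        _ ≤ ∑ v ∈ T, (-1) / (G.degV v : ℝ) := Finset.card_nsmul_le_sum _ _ _ hterm
    have hbound2 : ((S \ T).card : ℝ) / (dLmax : ℝ) ≤ ∑ v ∈ S \ T, 1 / (G.degV v : ℝ) := by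
      have hterm : ∀ v ∈ S \ T, 1 / (dLmax : ℝ) ≤ 1 / (G.degV v : ℝ) := by
        intro v hv
        exact one_div_le_one_div_of_le (hdegpos v) (by exact_mod_cast (hdeg v).2)
      calc ((S \ T).card : ℝ) / (dLmax : ℝ) = (S \ T).card • (1 / (dLmax : ℝ)) := by
            simp [nsmul_eq_mul]; ring
        _ ≤ _ := Finset.card_nsmul_le_sum _ _ _ hterm
    have hcardsd : ((S \ T).card : ℝ) = (m : ℝ) - (T.card : ℝ) := by
      have hsd := Finset.card_sdiff_of_subset hTsub
      rw [hsd, hm]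
      have hle := Finset.card_le_card hTsub
      rw [hm] at hle
      push_cast [Nat.cast_sub hle]
      ring
    have hkey : (dLmin : ℝ) * (m : ℝ) ≤ ((dLmin : ℝ) + (dLmax : ℝ)) * (T.card : ℝ) := by
      rw [hinner ω, hsplit] at hω
      rw [hcardsd] at hbound2
      have hcomb : ((m : ℝ) - (T.card : ℝ)) / (dLmax : ℝ) ≤ (T.card : ℝ) / (dLmin : ℝ) := by
        have hle0 : (-(T.card : ℝ)) / (dLmin : ℝ) + ((m : ℝ) - (T.card : ℝ)) / (dLmax : ℝ) ≤ 0 :=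
          le_trans (add_le_add hbound1 hbound2) hω
        have h2 : (-(T.card : ℝ)) / (dLmin : ℝ) = -((T.card : ℝ) / (dLmin : ℝ)) := by ring
        linarith [hle0]
      rw [div_le_div_iff₀ hdM hdm] at hcomb
      nlinarith [hcomb]
    have hTF : T ∈ F := Finset.mem_filter.mpr ⟨Finset.mem_powerset.mpr hTsub, hkey⟩
    refine Set.mem_iUnion.mpr ⟨T, Set.mem_iUnion.mpr ⟨hTF, ?_⟩⟩
    exact Set.mem_iInter.mpr fun v => Set.mem_iInter.mpr fun hv => ((hmemT v).mp hv).2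
  -- per-pattern measure bound
  have hAT : ∀ T ∈ F, μ (A T) ≤ ENNReal.ofReal
      (p ^ (((dLmin : ℝ) / ((dLmin : ℝ) + (dLmax : ℝ))) * (m : ℝ))) := by
    intro T hTF
    obtain ⟨hTpow, hTcond⟩ := Finset.mem_filter.mp hTF
    have hTsub : T ⊆ S := Finset.mem_powerset.mp hTpow
    have hprod : μ (A T) = ∏ v ∈ T, μ (Neg v) := by
      rw [hAdef]
      refine hind.meas_biInter (fun v _ => ?_)
      exact ⟨{(-1 : ℝ)}, measurableSet_singleton _, rfl⟩
    have hpv : ∀ v ∈ T, μ (Neg v) = ENNReal.ofReal p := fun v _ => (hdist v).1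
    rw [hprod, Finset.prod_congr rfl hpv, Finset.prod_const, ← ENNReal.ofReal_pow hp0]
    apply ENNReal.ofReal_le_ofReal
    have hsum : (0:ℝ) < (dLmin : ℝ) + (dLmax : ℝ) := by linarith
    have hexple : ((dLmin : ℝ) / ((dLmin : ℝ) + (dLmax : ℝ))) * (m : ℝ) ≤ (T.card : ℝ) := by
      rw [div_mul_eq_mul_div, div_le_iff₀ hsum]
      linarith [hTcond]
    have hexppos : 0 < ((dLmin : ℝ) / ((dLmin : ℝ) + (dLmax : ℝ))) * (m : ℝ) := by
      apply mul_pos (div_pos hdm hsum)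
      exact_mod_cast hm0'
    rcases eq_or_lt_of_le hp0 with hpe | hpp
    · rw [← hpe, Real.zero_rpow (ne_of_gt hexppos), zero_pow]
      intro hTc
      rw [hTc] at hexple
      norm_num at hexple
      linarith
    · rw [← Real.rpow_natCast p T.card]
      exact Real.rpow_le_rpow_of_exponent_ge hpp hp1 hexple
  -- put everything together
  calc μ {ω | inner' (fun v => lam v ω) (G.chi ψ) ≤ 0}
      ≤ μ (N ∪ ⋃ T ∈ F, A T) := measure_mono hcover
    _ ≤ μ N + μ (⋃ T ∈ F, A T) := measure_union_le _ _
    _ = μ (⋃ T ∈ F, A T) := by rw [hN, zero_add]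
    _ ≤ ∑ T ∈ F, μ (A T) := measure_biUnion_finset_le F A
    _ ≤ ∑ _T ∈ F, ENNReal.ofReal
        (p ^ (((dLmin : ℝ) / ((dLmin : ℝ) + (dLmax : ℝ))) * (m : ℝ))) :=
        Finset.sum_le_sum hAT
    _ = (F.card : ENNReal) * ENNReal.ofReal
        (p ^ (((dLmin : ℝ) / ((dLmin : ℝ) + (dLmax : ℝ))) * (m : ℝ))) := by
        rw [Finset.sum_const, nsmul_eq_mul]
    _ ≤ ENNReal.ofReal (2 ^ m *
        p ^ (((dLmin : ℝ) / ((dLmin : ℝ) + (dLmax : ℝ))) * (m : ℝ))) := by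
        rw [ENNReal.ofReal_mul (by positivity)]
        apply mul_le_mul' ?_ le_rfl
        have hFcard : F.card ≤ 2 ^ m := by
          calc F.card ≤ S.powerset.card := Finset.card_le_card (Finset.filter_subset _ _)
            _ = 2 ^ m := by rw [Finset.card_powerset, hm]
        calc (F.card : ENNReal) ≤ ((2 ^ m : ℕ) : ENNReal) := by exact_mod_cast hFcard
          _ = ENNReal.ofReal ((2:ℝ) ^ m) := by
              rw [ENNReal.ofReal_pow (by norm_num)]
              norm_num
end
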